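/- If R = a + ib with a, b real satisfies the characteristic equation -R - (λθ/N)(e^{-RΔ} + δR e^{-RΔ}) - μ = 0, and N² e^{2aΔ} ≠ δ²λ²θ², then b² = (λ²θ²(aδ+1)² - e^{2aΔ}N²(a+μ)²)/(e^{2aΔ}N² - δ²λ²θ²). -/

import Mathlib

open Real Complex

theorem char_eq_imaginary_part_formula
    (lam mu th dlt Del a b : ℝ) (N : ℕ) (hN : 0 < N)
    (hlam : 0 < lam) (hmu : 0 < mu) (hth : 0 < th) (hdlt : 0 ≤ dlt) (hDel : 0 < Del)
    (R : ℂ) (hR : R = (a : ℂ) + (b : ℂ) * Complex.I)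
    (hchar : -R - ((lam * th / N : ℝ) : ℂ) *
        (Complex.exp (-R * (Del : ℂ)) + (dlt : ℂ) * R * Complex.exp (-R * (Del : ℂ)))
        - (mu : ℂ) = 0)
    (hne : (N : ℝ)^2 * Real.exp (2 * a * Del) ≠ dlt^2 * lam^2 * th^2) :
    b^2 = (lam^2 * th^2 * (a * dlt + 1)^2 - Real.exp (2 * a * Del) * (N : ℝ)^2 * (a + mu)^2)
      / (Real.exp (2 * a * Del) * (N : ℝ)^2 - dlt^2 * lam^2 * th^2) := by
  subst hR
  have hNne : (N : ℝ) ≠ 0 := Nat.cast_ne_zero.mpr hN.ne'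
  have hkey : ((a : ℂ) + b * Complex.I) + mu =
      -((lam * th / N : ℝ) : ℂ) * (1 + (dlt : ℂ) * ((a : ℂ) + b * Complex.I)) *
        Complex.exp (-((a : ℂ) + b * Complex.I) * (Del : ℂ)) := by
    linear_combination -hchar
  have h2 := congrArg Complex.normSq hkey
  rw [Complex.normSq_mul, Complex.normSq_mul] at h2
  have hexp : Complex.normSq (Complex.exp (-((a : ℂ) + b * Complex.I) * (Del : ℂ)))
      = Real.exp (-(2 * a * Del)) := by
    rw [← Complex.sq_norm, Complex.norm_exp]
    have hre : (-((a : ℂ) + b * Complex.I) * (Del : ℂ)).re = -a * Del := by simp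
    rw [hre, sq, ← Real.exp_add]
    ring_nf
  rw [hexp] at h2
  simp only [Complex.normSq_apply, Complex.add_re, Complex.add_im, Complex.neg_re,
    Complex.neg_im, Complex.mul_re, Complex.mul_im, Complex.one_re, Complex.one_im,
    Complex.ofReal_re, Complex.ofReal_im, Complex.I_re, Complex.I_im] at h2
  have hE : Real.exp (-(2 * a * Del)) = (Real.exp (2 * a * Del))⁻¹ := by
    rw [Real.exp_neg]
  rw [hE] at h2
  have hEpos : 0 < Real.exp (2 * a * Del) := Real.exp_pos _
  have hden : Real.exp (2 * a * Del) * (N : ℝ)^2 - dlt^2 * lam^2 * th^2 ≠ 0 := by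
    intro h
    apply hne
    nlinarith [h]
  field_simp at h2 ⊢
  rw [eq_div_iff (by intro h; apply hden; rw [show a * 2 * Del = 2 * a * Del by ring] at h; linarith)]
  linear_combination h2
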